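/- Fix an integer ℓ > 2. Suppose a partition λ is not an (ℓ,0)-JM partition. Then there exist boxes (c,d), (c,w), (z,d) in the Young diagram of λ with c < z and d < w such that ℓ divides h_{(c,d)}^λ, ℓ does not divide h_{(c,w)}^λ, and ℓ does not divide h_{(z,d)}^λ. -/
import Mathlib


noncomputable section

/-!
Common combinatorial definitions: partitions (English notation, rows indexed from 1),
Young diagrams, hooks, rim hooks, ladders, residues, crystal operators (classical and
ladder versions), locked boxes, regularization classes, dominance order.
-/

structure YPartition where
  part : ℕ → ℕ
  zero_at_zero : part 0 = 0
  antitone : ∀ i j : ℕ, 1 ≤ i → i ≤ j → part j ≤ part i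
  eventually_zero : ∃ N : ℕ, ∀ i : ℕ, N ≤ i → part i = 0

namespace YPartition

/-- The set of boxes of the Young diagram of `μ` (row, column), both indices ≥ 1. -/
def cells (μ : YPartition) : Set (ℕ × ℕ) :=
  {p | 1 ≤ p.1 ∧ 1 ≤ p.2 ∧ p.2 ≤ μ.part p.1}

/-- The length of column `b`: the number of rows containing a box in column `b`. -/
def colLen (μ : YPartition) (b : ℕ) : ℕ :=
  Nat.card {a : ℕ | 1 ≤ a ∧ b ≤ μ.part a}

/-- The arm of box `(a,b)`: boxes strictly to its right in its row. -/
def arm (μ : YPartition) (a b : ℕ) : ℕ := μ.part a - b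

/-- The leg of box `(a,b)`: boxes strictly below it in its column. -/
def leg (μ : YPartition) (a b : ℕ) : ℕ := μ.colLen b - a

/-- The hook length of the box `(a,b)`: arm + leg + 1. -/
def hook (μ : YPartition) (a b : ℕ) : ℕ := (μ.part a - b) + (μ.colLen b - a) + 1

/-- The number of boxes of `μ`. -/
def size (μ : YPartition) : ℕ := μ.cells.ncard

/-- The number of (nonzero) parts of `μ`. -/
def length (μ : YPartition) : ℕ := μ.colLen 1

/-- `μ` is an `(ℓ,0)`-JM partition: there are no boxes `(a,b)`, `(a,y)`, `(x,b)` with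
`ℓ ∣ hook (a,b)` while `ℓ` divides neither `hook (a,y)` nor `hook (x,b)`. -/
def IsJM (ℓ : ℕ) (μ : YPartition) : Prop :=
  ¬ ∃ a b y x : ℕ, (a, b) ∈ μ.cells ∧ (a, y) ∈ μ.cells ∧ (x, b) ∈ μ.cells ∧
    ℓ ∣ μ.hook a b ∧ ¬ ℓ ∣ μ.hook a y ∧ ¬ ℓ ∣ μ.hook x b

/-- Two boxes share an edge. -/
def BoxAdjacent (p q : ℕ × ℕ) : Prop :=
  (p.1 = q.1 ∧ (p.2 + 1 = q.2 ∨ q.2 + 1 = p.2)) ∨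
  (p.2 = q.2 ∧ (p.1 + 1 = q.1 ∨ q.1 + 1 = p.1))

/-- A set of boxes is connected (via shared edges, inside the set). -/
def SetConnected (S : Set (ℕ × ℕ)) : Prop :=
  ∀ p ∈ S, ∀ q ∈ S,
    Relation.ReflTransGen (fun x y => x ∈ S ∧ y ∈ S ∧ BoxAdjacent x y) p q

/-- `S` contains no 2 × 2 square of boxes. -/
def HasNoSquare (S : Set (ℕ × ℕ)) : Prop :=
  ¬ ∃ a b : ℕ, (a, b) ∈ S ∧ (a + 1, b) ∈ S ∧ (a, b + 1) ∈ S ∧ (a + 1, b + 1) ∈ S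

/-- `S` is a removable `ℓ`-rim hook of `μ`: a connected set of `ℓ` boxes of `μ` with no
2 × 2 square whose removal leaves the Young diagram of a partition. -/
def IsRimHook (ℓ : ℕ) (μ : YPartition) (S : Set (ℕ × ℕ)) : Prop :=
  S ⊆ μ.cells ∧ S.ncard = ℓ ∧ SetConnected S ∧ HasNoSquare S ∧
    ∃ ν : YPartition, ν.cells = μ.cells \ S

/-- `S` is contained in a single row. -/
def HorizontalHook (S : Set (ℕ × ℕ)) : Prop := ∃ a : ℕ, ∀ p ∈ S, p.1 = a

/-- `S` is contained in a single column. -/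
def VerticalHook (S : Set (ℕ × ℕ)) : Prop := ∃ b : ℕ, ∀ p ∈ S, p.2 = b

/-- Two sets of boxes are adjacent when some box of one shares an edge with a box of the other. -/
def SetsAdjacent (R S : Set (ℕ × ℕ)) : Prop := ∃ p ∈ R, ∃ q ∈ S, BoxAdjacent p q

/-- An `ℓ`-core: a partition with no removable `ℓ`-rim hook. -/
def IsCore (ℓ : ℕ) (μ : YPartition) : Prop := ¬ ∃ S : Set (ℕ × ℕ), IsRimHook ℓ μ S

/-- `p` and `q` lie on the same ladder: going down one column step the row increases
by `ℓ - 1`. -/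
def SameLadder (ℓ : ℕ) (p q : ℕ × ℕ) : Prop :=
  (q.1 : ℤ) - (p.1 : ℤ) = ((ℓ : ℤ) - 1) * ((p.2 : ℤ) - (q.2 : ℤ))

/-- The index of the ladder through `p`: the ladder through `(k,1)` has index `k`. -/
def ladderIdx (ℓ : ℕ) (p : ℕ × ℕ) : ℕ := p.1 + (ℓ - 1) * (p.2 - 1)

/-- The residue of position `(a,b)` is `b - a` mod `ℓ`. -/
def res (ℓ : ℕ) (p : ℕ × ℕ) : ℕ := (((p.2 : ℤ) - (p.1 : ℤ)) % (ℓ : ℤ)).toNat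

/-- `p` is a removable box of `μ`. -/
def Removable (μ : YPartition) (p : ℕ × ℕ) : Prop :=
  1 ≤ p.1 ∧ p.2 = μ.part p.1 ∧ μ.part (p.1 + 1) < p.2

/-- `p` is an addable box of `μ`. -/
def Addable (μ : YPartition) (p : ℕ × ℕ) : Prop :=
  1 ≤ p.1 ∧ p.2 = μ.part p.1 + 1 ∧ (p.1 = 1 ∨ p.2 ≤ μ.part (p.1 - 1))

/-- The removable `i`-boxes of `μ`. -/
def RemovableRes (ℓ i : ℕ) (μ : YPartition) : Set (ℕ × ℕ) :=
  {p | Removable μ p ∧ res ℓ p = i}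

/-- The addable `i`-boxes of `μ`. -/
def AddableRes (ℓ i : ℕ) (μ : YPartition) : Set (ℕ × ℕ) :=
  {p | Addable μ p ∧ res ℓ p = i}

/-- Ladder reading order (reflexive): ladders left to right, top to bottom within a ladder.
`LadderLE ℓ p q` means `p` is read before (or equal to) `q`. -/
def LadderLE (ℓ : ℕ) (p q : ℕ × ℕ) : Prop :=
  ladderIdx ℓ p < ladderIdx ℓ q ∨ (ladderIdx ℓ p = ladderIdx ℓ q ∧ p.1 ≤ q.1)

/-- Strict ladder reading order. -/
def LadderLT (ℓ : ℕ) (p q : ℕ × ℕ) : Prop :=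
  ladderIdx ℓ p < ladderIdx ℓ q ∨ (ladderIdx ℓ p = ladderIdx ℓ q ∧ p.1 < q.1)

/-- Classical reading order (reflexive): rows from bottom to top.
`RowLE p q` means `p` is read before (or equal to) `q`. -/
def RowLE (p q : ℕ × ℕ) : Prop := q.1 ≤ p.1

/-- Given a reading order `le`, a set `Rem` of `-` marks and `Add` of `+` marks, a `-` at `p`
survives the cancellation of adjacent `-+` pairs iff every interval of the reading word
starting at `p` contains strictly more `-`'s than `+`'s. -/
def NormalIn (le : ℕ × ℕ → ℕ × ℕ → Prop) (Rem Add : Set (ℕ × ℕ)) (p : ℕ × ℕ) : Prop :=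
  p ∈ Rem ∧ ∀ q ∈ Rem ∪ Add, le p q →
    (Add ∩ {s | le p s ∧ le s q}).ncard < (Rem ∩ {s | le p s ∧ le s q}).ncard

/-- A `+` at `q` survives the cancellation of adjacent `-+` pairs iff every interval of the
reading word ending at `q` contains strictly more `+`'s than `-`'s. -/
def ConormalIn (le : ℕ × ℕ → ℕ × ℕ → Prop) (Rem Add : Set (ℕ × ℕ)) (q : ℕ × ℕ) : Prop :=
  q ∈ Add ∧ ∀ p ∈ Rem ∪ Add, le p q →
    (Rem ∩ {s | le p s ∧ le s q}).ncard < (Add ∩ {s | le p s ∧ le s q}).ncard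

/-- Ladder normal `i`-box. -/
def LadderNormal (ℓ i : ℕ) (μ : YPartition) (p : ℕ × ℕ) : Prop :=
  NormalIn (LadderLE ℓ) (RemovableRes ℓ i μ) (AddableRes ℓ i μ) p

/-- Ladder conormal `i`-box. -/
def LadderConormal (ℓ i : ℕ) (μ : YPartition) (p : ℕ × ℕ) : Prop :=
  ConormalIn (LadderLE ℓ) (RemovableRes ℓ i μ) (AddableRes ℓ i μ) p

/-- Normal `i`-box (classical signature). -/
def ClassNormal (ℓ i : ℕ) (μ : YPartition) (p : ℕ × ℕ) : Prop :=
  NormalIn RowLE (RemovableRes ℓ i μ) (AddableRes ℓ i μ) p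

/-- Conormal `i`-box (classical signature). -/
def ClassConormal (ℓ i : ℕ) (μ : YPartition) (p : ℕ × ℕ) : Prop :=
  ConormalIn RowLE (RemovableRes ℓ i μ) (AddableRes ℓ i μ) p

/-- `ε̂_i(μ)`: number of ladder normal `i`-boxes. -/
def hatEps (ℓ i : ℕ) (μ : YPartition) : ℕ := {p | LadderNormal ℓ i μ p}.ncard

/-- `φ̂_i(μ)`: number of ladder conormal `i`-boxes. -/
def hatPhi (ℓ i : ℕ) (μ : YPartition) : ℕ := {p | LadderConormal ℓ i μ p}.ncard

/-- `ε_i(μ)`: number of normal `i`-boxes. -/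
def eps (ℓ i : ℕ) (μ : YPartition) : ℕ := {p | ClassNormal ℓ i μ p}.ncard

/-- `φ_i(μ)`: number of conormal `i`-boxes. -/
def phi (ℓ i : ℕ) (μ : YPartition) : ℕ := {p | ClassConormal ℓ i μ p}.ncard

/-- The ladder good `i`-box: the leftmost `-` of the reduced ladder `i`-signature. -/
def LadderGood (ℓ i : ℕ) (μ : YPartition) (p : ℕ × ℕ) : Prop :=
  LadderNormal ℓ i μ p ∧ ∀ q, LadderNormal ℓ i μ q → LadderLE ℓ p q

/-- The ladder cogood `i`-box: the rightmost `+` of the reduced ladder `i`-signature. -/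
def LadderCogood (ℓ i : ℕ) (μ : YPartition) (p : ℕ × ℕ) : Prop :=
  LadderConormal ℓ i μ p ∧ ∀ q, LadderConormal ℓ i μ q → LadderLE ℓ q p

/-- The good `i`-box (classical). -/
def ClassGood (ℓ i : ℕ) (μ : YPartition) (p : ℕ × ℕ) : Prop :=
  ClassNormal ℓ i μ p ∧ ∀ q, ClassNormal ℓ i μ q → RowLE p q

/-- The cogood `i`-box (classical). -/
def ClassCogood (ℓ i : ℕ) (μ : YPartition) (p : ℕ × ℕ) : Prop :=
  ClassConormal ℓ i μ p ∧ ∀ q, ClassConormal ℓ i μ q → RowLE q p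

/-- The ladder crystal operator `f̂_i` as a relation: `mu = f̂_i lam ≠ 0`. -/
def HatF (ℓ i : ℕ) (lam mu : YPartition) : Prop :=
  ∃ p, LadderCogood ℓ i lam p ∧ mu.cells = insert p lam.cells

/-- The ladder crystal operator `ê_i` as a relation: `mu = ê_i lam ≠ 0`. -/
def HatE (ℓ i : ℕ) (lam mu : YPartition) : Prop :=
  ∃ p, LadderGood ℓ i lam p ∧ mu.cells = lam.cells \ {p}

/-- The classical crystal operator `f̃_i` as a relation: `mu = f̃_i lam ≠ 0`. -/
def TildeF (ℓ i : ℕ) (lam mu : YPartition) : Prop :=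
  ∃ p, ClassCogood ℓ i lam p ∧ mu.cells = insert p lam.cells

/-- The classical crystal operator `ẽ_i` as a relation: `mu = ẽ_i lam ≠ 0`. -/
def TildeE (ℓ i : ℕ) (lam mu : YPartition) : Prop :=
  ∃ p, ClassGood ℓ i lam p ∧ mu.cells = lam.cells \ {p}

/-- `n`-fold composition of a relation. -/
def RelIter {α : Type} (r : α → α → Prop) : ℕ → α → α → Prop
  | 0 => fun a b => a = b
  | n + 1 => fun a b => ∃ c, r a c ∧ RelIter r n c b

/-- The empty partition. -/
def emptyP : YPartition where
  part := fun _ => 0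
  zero_at_zero := rfl
  antitone := fun _ _ _ _ => le_rfl
  eventually_zero := ⟨0, fun _ _ => rfl⟩

/-- `μ` is a node of the ladder crystal `B(Λ₀)^L`: it is obtained from the empty
partition by finitely many applications of the operators `f̂_i`, `0 ≤ i < ℓ`. -/
def LadderNode (ℓ : ℕ) (μ : YPartition) : Prop :=
  Relation.ReflTransGen (fun a b => ∃ i : ℕ, i < ℓ ∧ HatF ℓ i a b) emptyP μ

/-- The type I locking condition at `(a,b)`: every unoccupied position on the ladder of
`(a,b)` lying below it has an unoccupied position directly above it. -/
def LadderClear (ℓ : ℕ) (μ : YPartition) (a b : ℕ) : Prop :=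
  ∀ c d : ℕ, 1 ≤ c → 1 ≤ d → SameLadder ℓ (a, b) (c, d) → a < c →
    (c, d) ∉ μ.cells → (c - 1, d) ∉ μ.cells

/-- Locked boxes of `μ`. -/
inductive Locked (ℓ : ℕ) (μ : YPartition) : ℕ × ℕ → Prop where
  | typeI_top : ∀ b : ℕ, (1, b) ∈ μ.cells → LadderClear ℓ μ 1 b → Locked ℓ μ (1, b)
  | typeI_up : ∀ a b : ℕ, (a + 1, b) ∈ μ.cells → Locked ℓ μ (a, b) →
      LadderClear ℓ μ (a + 1) b → Locked ℓ μ (a + 1, b)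
  | typeII : ∀ a b b' : ℕ, (a, b) ∈ μ.cells → b < b' → Locked ℓ μ (a, b') → Locked ℓ μ (a, b)

/-- Number of boxes of `μ` on the `k`-th ladder. -/
def ladderCount (ℓ : ℕ) (μ : YPartition) (k : ℕ) : ℕ :=
  (μ.cells ∩ {p | ladderIdx ℓ p = k}).ncard

/-- `lam` and `mu` lie in the same regularization class: they have the same number of
boxes on every ladder. -/
def SameRegClass (ℓ : ℕ) (lam mu : YPartition) : Prop :=
  ∀ k : ℕ, ladderCount ℓ lam k = ladderCount ℓ mu k

/-- The boxes of `μ` are top-justified on each ladder. -/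
def TopJustified (ℓ : ℕ) (μ : YPartition) : Prop :=
  ∀ p ∈ μ.cells, ∀ q : ℕ × ℕ, 1 ≤ q.1 → 1 ≤ q.2 →
    ladderIdx ℓ q = ladderIdx ℓ p → q.1 < p.1 → q ∈ μ.cells

/-- `mu = R lam`: the regularization of `lam`, obtained by moving every box of `lam` to
the topmost unoccupied positions of its ladder. -/
def IsRegularization (ℓ : ℕ) (lam mu : YPartition) : Prop :=
  SameRegClass ℓ lam mu ∧ TopJustified ℓ mu

/-- Dominance order on partitions. -/
def DomLE (lam mu : YPartition) : Prop :=
  ∀ j : ℕ, ∑ i ∈ Finset.Icc 1 j, lam.part i ≤ ∑ i ∈ Finset.Icc 1 j, mu.part i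

/-- All (positive) positions on the `k`-th ladder. -/
def LadderPositions (ℓ k : ℕ) : Set (ℕ × ℕ) :=
  {p | 1 ≤ p.1 ∧ 1 ≤ p.2 ∧ ladderIdx ℓ p = k}

/-- The set of locked boxes of `μ`. -/
def lockedCells (ℓ : ℕ) (μ : YPartition) : Set (ℕ × ℕ) := {p | Locked ℓ μ p}

/-- The number of unlocked boxes of `μ` on the `k`-th ladder. -/
def unlockedCount (ℓ : ℕ) (μ : YPartition) (k : ℕ) : ℕ :=
  ((μ.cells ∩ LadderPositions ℓ k) \ lockedCells ℓ μ).ncard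

/-- The diagram `S μ`: locked boxes stay put, and on each ladder the unlocked boxes are
moved into the lowest positions of that ladder not occupied by locked boxes. -/
def SCells (ℓ : ℕ) (μ : YPartition) : Set (ℕ × ℕ) :=
  lockedCells ℓ μ ∪
    {p | 1 ≤ p.1 ∧ 1 ≤ p.2 ∧ p ∉ lockedCells ℓ μ ∧
      ((LadderPositions ℓ (ladderIdx ℓ p) ∩ {q | p.1 < q.1}) \ lockedCells ℓ μ).ncard
        < unlockedCount ℓ μ (ladderIdx ℓ p)}

/-- `μ` is `ℓ`-regular: no part occurs `ℓ` or more times. -/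
def IsRegular (ℓ : ℕ) (μ : YPartition) : Prop :=
  ∀ a : ℕ, 1 ≤ a → 0 < μ.part (a + (ℓ - 1)) → μ.part (a + (ℓ - 1)) < μ.part a

/-- Removal of a single horizontal or vertical `ℓ`-rim hook. -/
def RemoveHV (ℓ : ℕ) (lam mu : YPartition) : Prop :=
  ∃ S : Set (ℕ × ℕ), IsRimHook ℓ lam S ∧ (HorizontalHook S ∨ VerticalHook S) ∧
    mu.cells = lam.cells \ S

/-- Condition (1): every removable `ℓ`-rim hook is horizontal or vertical. -/
def Cond1 (ℓ : ℕ) (μ : YPartition) : Prop :=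
  ∀ S : Set (ℕ × ℕ), IsRimHook ℓ μ S → HorizontalHook S ∨ VerticalHook S

/-- Condition (2): no vertical (resp. horizontal) `ℓ`-rim hook `R` of `μ` together with an
adjacent horizontal (resp. vertical) `ℓ`-rim hook `S` of `μ \ R` . -/
def Cond2 (ℓ : ℕ) (μ : YPartition) : Prop :=
  ¬ ∃ (R S : Set (ℕ × ℕ)) (ν : YPartition), IsRimHook ℓ μ R ∧ ν.cells = μ.cells \ R ∧
    IsRimHook ℓ ν S ∧ SetsAdjacent R S ∧
    ((VerticalHook R ∧ HorizontalHook S) ∨ (HorizontalHook R ∧ VerticalHook S))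

/-- A generalized `ℓ`-partition: conditions (1) and (2) hold after removing any sequence of
horizontal and vertical `ℓ`-rim hooks (including the empty sequence). -/
def IsGenLPartition (ℓ : ℕ) (lam : YPartition) : Prop :=
  ∀ mu : YPartition, Relation.ReflTransGen (RemoveHV ℓ) lam mu → Cond1 ℓ mu ∧ Cond2 ℓ mu

/-- The `t`-th row (from the top) of the bottom block of the decomposition
`(μ, r, s, ρ, σ)`: the number of values `v ∈ [1, s+1]` whose column block still reaches
row `t`; column block `v` consists of `σ_v·ℓ + (s+1−v)(ℓ−1)` rows of length `≥ v`. -/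
def bottomPart (ℓ s : ℕ) (σ : YPartition) (t : ℕ) : ℕ :=
  ((Finset.Icc 1 (s + 1)).filter fun v => t ≤ σ.part v * ℓ + (s + 1 - v) * (ℓ - 1)).card

/-- The `i`-th part of the partition corresponding to the data `(μ, r, s, ρ, σ)`. -/
def decompPart (ℓ : ℕ) (mu : YPartition) (r s : ℕ) (ρ σ : YPartition) (i : ℕ) : ℕ :=
  if i = 0 then 0
  else if i ≤ r + 1 then s + mu.part 1 + (r + 1 - i) * (ℓ - 1) + ρ.part i * ℓ
  else if i ≤ r + max mu.length 1 then s + mu.part (i - r)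
  else bottomPart ℓ s σ (i - (r + max mu.length 1))

/-- Admissibility of the decomposition data `(μ, r, s, ρ, σ)`. -/
def GoodData (ℓ : ℕ) (mu : YPartition) (r s : ℕ) (ρ σ : YPartition) : Prop :=
  IsCore ℓ mu ∧ mu.part 1 < mu.part 2 + (ℓ - 1) ∧ mu.colLen 1 < mu.colLen 2 + (ℓ - 1) ∧
  ρ.length ≤ r + 1 ∧ σ.length ≤ s + 1 ∧
  (mu.cells = ∅ → ρ.part (r + 1) = 0 ∨ σ.part (s + 1) = 0)

/-- `lam ≈ (μ, r, s, ρ, σ)`. -/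
def Decomposes (ℓ : ℕ) (lam mu : YPartition) (r s : ℕ) (ρ σ : YPartition) : Prop :=
  ∀ i : ℕ, lam.part i = decompPart ℓ mu r s ρ σ i

/-- Removal of a single `ℓ`-rim hook. -/
def RemoveHook (ℓ : ℕ) (lam mu : YPartition) : Prop :=
  ∃ S : Set (ℕ × ℕ), IsRimHook ℓ lam S ∧ mu.cells = lam.cells \ S

/-- `lam` has `ℓ`-core `nu` and `ℓ`-weight `w`. -/
def HasCoreAndWeight (ℓ : ℕ) (lam nu : YPartition) (w : ℕ) : Prop :=
  IsCore ℓ nu ∧ RelIter (RemoveHook ℓ) w lam nu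

/-- An L-partition. -/
def IsLPartition (ℓ : ℕ) (lam : YPartition) : Prop :=
  ¬ ∃ p : ℕ × ℕ, p ∈ lam.cells ∧ ℓ ∣ lam.hook p.1 p.2 ∧
    (lam.arm p.1 p.2 < (ℓ - 1) * lam.leg p.1 p.2 ∨
     lam.leg p.1 p.2 < (ℓ - 1) * lam.arm p.1 p.2)

end YPartition

open YPartition

/-! ### Auxiliary lemmas for statement1 -/

lemma jm_not_dvd_small (ℓ : ℕ) (hℓ : 2 < ℓ) {k : ℤ} (h1 : 0 < k) (h2 : k < ℓ) :
    ¬ (ℓ:ℤ) ∣ k := fun h => absurd (Int.le_of_dvd h1 h) (by omega)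

lemma jm_dvd_comb (ℓ : ℤ) {a b c : ℤ} (h1 : ℓ ∣ a) (h2 : ℓ ∣ b) (h : c = a - b) :
    ℓ ∣ c := h ▸ dvd_sub h1 h2

lemma jm_le_colLen_iff (lam : YPartition) (L : ℕ) (hL : ∀ i, L ≤ i → lam.part i = 0)
    (b : ℕ) (hb : 1 ≤ b) (a : ℕ) (ha : 1 ≤ a) :
    b ≤ lam.part a ↔ a ≤ lam.colLen b := by
  classical
  set m := Nat.findGreatest (fun a => b ≤ lam.part a) L with hm
  obtain ⟨hmL, hPm0, hgr⟩ := Nat.findGreatest_eq_iff.mp hm.symm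
  have hle : ∀ a', 1 ≤ a' → b ≤ lam.part a' → a' ≤ m := by
    intro a' h1 h2
    have haN : a' ≤ L := by
      by_contra hc
      push_neg at hc
      have := hL a' hc.le
      omega
    exact Nat.le_findGreatest haN h2
  have hPm : ∀ a', 1 ≤ a' → a' ≤ m → b ≤ lam.part a' := by
    intro a' h1 h2
    have hP : b ≤ lam.part m := hPm0 (by omega)
    exact le_trans hP (lam.antitone a' m h1 h2)
  have hset : {p : ℕ | 1 ≤ p ∧ b ≤ lam.part p} = Set.Icc 1 m := by
    ext a'
    simp only [Set.mem_setOf_eq, Set.mem_Icc]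
    exact ⟨fun ⟨h1, h2⟩ => ⟨h1, hle a' h1 h2⟩, fun ⟨h1, h2⟩ => ⟨h1, hPm a' h1 h2⟩⟩
  have hcol : lam.colLen b = m := by
    unfold YPartition.colLen
    rw [hset]
    simp [Nat.card_Icc]
  rw [hcol]
  exact ⟨hle a ha, hPm a ha⟩

lemma jm_colLen_le (lam : YPartition) (L : ℕ) (hL : ∀ i, L ≤ i → lam.part i = 0)
    (b : ℕ) (hb : 1 ≤ b) : lam.colLen b ≤ L := by
  by_contra hc
  push_neg at hc
  have h1 : 1 ≤ lam.colLen b := by omega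
  have h2 := (jm_le_colLen_iff lam L hL b hb (lam.colLen b) h1).mpr le_rfl
  have h3 := hL (lam.colLen b) (by omega)
  omega

lemma jm_colLen_anti (lam : YPartition) (L : ℕ) (hL : ∀ i, L ≤ i → lam.part i = 0)
    (b b' : ℕ) (hb : 1 ≤ b) (hbb : b ≤ b') : lam.colLen b' ≤ lam.colLen b := by
  rcases Nat.eq_zero_or_pos (lam.colLen b') with h | h
  · omega
  · have h2 := (jm_le_colLen_iff lam L hL b' (by omega) (lam.colLen b') h).mpr le_rfl
    exact (jm_le_colLen_iff lam L hL b hb (lam.colLen b') h).mp (le_trans hbb h2)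

lemma jm_hook_eq (lam : YPartition) (L : ℕ) (hL : ∀ i, L ≤ i → lam.part i = 0)
    (r c : ℕ) (hcell : (r, c) ∈ lam.cells) :
    lam.hook r c + ((c - 1) + (L - lam.colLen c)) = lam.part r + (L - r) := by
  obtain ⟨h1, h2, h3⟩ := hcell
  simp only at h1 h2 h3
  have h4 : r ≤ lam.colLen c := (jm_le_colLen_iff lam L hL c h2 r h1).mp h3
  have h5 : lam.colLen c ≤ L := jm_colLen_le lam L hL c h2
  simp only [YPartition.hook]
  omega

lemma jm_cell_of (lam : YPartition) (L : ℕ) (hL : ∀ i, L ≤ i → lam.part i = 0)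
    (r c : ℕ) (hr : 1 ≤ r) (hc : 1 ≤ c)
    (h : (c - 1) + (L - lam.colLen c) < lam.part r + (L - r)) :
    (r, c) ∈ lam.cells := by
  refine ⟨hr, hc, ?_⟩
  show c ≤ lam.part r
  by_contra hcc
  push_neg at hcc
  have h4 : lam.colLen c < r := by
    by_contra hcl
    push_neg at hcl
    have := (jm_le_colLen_iff lam L hL c hc r hr).mpr hcl
    omega
  have h5 : lam.colLen c ≤ L := jm_colLen_le lam L hL c hc
  rcases le_or_gt r L with h6 | h6
  · omega
  · have := hL r h6.le
    omega

lemma jm_cover (lam : YPartition) (L : ℕ) (hL0 : 1 ≤ L)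
    (hL : ∀ i, L ≤ i → lam.part i = 0) (n : ℕ) :
    (∃ d, 1 ≤ d ∧ (d - 1) + (L - lam.colLen d) = n) ∨
    (∃ c, 1 ≤ c ∧ lam.part c + (L - c) = n) := by
  classical
  have hpL : lam.part L = 0 := hL L le_rfl
  by_cases hn : lam.part 1 + (L - 1) < n
  · left
    refine ⟨n + 1 - L, by omega, ?_⟩
    have hcol0 : lam.colLen (n + 1 - L) = 0 := by
      by_contra hc
      have h1 : 1 ≤ lam.colLen (n + 1 - L) := by omega
      have h2 := (jm_le_colLen_iff lam L hL (n + 1 - L) (by omega)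
        (lam.colLen (n + 1 - L)) h1).mpr le_rfl
      have h3 := lam.antitone 1 (lam.colLen (n + 1 - L)) le_rfl h1
      omega
    rw [hcol0]
    omega
  · push_neg at hn
    have hex : ∃ i, 1 ≤ i ∧ lam.part i + (L - i) ≤ n := ⟨L, hL0, by omega⟩
    have hx1 : 1 ≤ Nat.find hex := (Nat.find_spec hex).1
    have hx2 : lam.part (Nat.find hex) + (L - Nat.find hex) ≤ n := (Nat.find_spec hex).2
    have hxL : Nat.find hex ≤ L := Nat.find_min' hex ⟨hL0, by omega⟩
    set x := Nat.find hex with hxdef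
    rcases eq_or_lt_of_le hx2 with heq | hlt
    · right
      exact ⟨x, hx1, heq⟩
    · left
      have hx9 : 2 ≤ x := by
        by_contra hc
        have hx1' : x = 1 := by omega
        rw [hx1'] at hlt
        omega
      have hmin := Nat.find_min hex (m := x - 1) (by omega)
      push_neg at hmin
      have hbx1 : n < lam.part (x - 1) + (L - (x - 1)) := by
        rcases Nat.lt_or_ge n (lam.part (x-1) + (L - (x-1))) with h | h
        · exact h
        · exact absurd h (by simpa using hmin (by omega))
      refine ⟨n + x - L, by omega, ?_⟩
      have hb1 : 1 ≤ n + x - L := by omega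
      have hpx : lam.part x < n + x - L := by omega
      have hpx1 : n + x - L ≤ lam.part (x - 1) := by omega
      have hc1 : x - 1 ≤ lam.colLen (n + x - L) :=
        (jm_le_colLen_iff lam L hL (n + x - L) hb1 (x - 1) (by omega)).mp hpx1
      have hc2 : lam.colLen (n + x - L) < x := by
        by_contra hcc
        push_neg at hcc
        have := (jm_le_colLen_iff lam L hL (n + x - L) hb1 x hx1).mpr hcc
        omega
      have hceq : lam.colLen (n + x - L) = x - 1 := by omega
      rw [hceq]
      omega

lemma jm_hook_pos (lam : YPartition) (r c : ℕ) : 1 ≤ lam.hook r c := by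
  simp only [YPartition.hook]
  omega


lemma jm_core (ℓ : ℕ) (hℓ : 2 < ℓ) (Gap Bead : ℕ → Prop)
    (cover : ∀ n : ℕ, Gap n ∨ Bead n)
    (D B E F : ℕ) (hGD : Gap D) (hBB : Bead B) (hDB : D < B)
    (hdvd : (ℓ:ℤ) ∣ (B:ℤ) - D)
    (hGE : Gap E) (hEB : E < B) (hE : ¬ (ℓ:ℤ) ∣ (E:ℤ) - D)
    (hBF : Bead F) (hDF : D < F) (hF : ¬ (ℓ:ℤ) ∣ (F:ℤ) - D) :
    ∃ g b e f : ℕ, Gap g ∧ Bead b ∧ Gap e ∧ Bead f ∧ g < e ∧ e < b ∧ g < f ∧ f < b ∧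
      (ℓ:ℤ) ∣ (b:ℤ) - g ∧ ¬ (ℓ:ℤ) ∣ (e:ℤ) - g ∧ ¬ (ℓ:ℤ) ∣ (f:ℤ) - g := by
  classical
  have hBDl : D + ℓ ≤ B := by
    have h := Int.le_of_dvd (by omega) hdvd
    omega
  by_cases hGapIn : ∃ e', Gap e' ∧ D < e' ∧ e' < B ∧ ¬ (ℓ:ℤ) ∣ (e':ℤ) - D
  · obtain ⟨e', hGe', hDe', he'B, he'⟩ := hGapIn
    by_cases hBeadIn : ∃ f', Bead f' ∧ D < f' ∧ f' < B ∧ ¬ (ℓ:ℤ) ∣ (f':ℤ) - D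
    · obtain ⟨f', hBf', hDf', hf'B, hf'⟩ := hBeadIn
      exact ⟨D, B, e', f', hGD, hBB, hGe', hBf', hDe', he'B, hDf', hf'B, hdvd, he', hf'⟩
    · -- Case 3: every bead strictly inside (D,B) has ℓ ∣ · - D
      push_neg at hBeadIn
      have hgaps : ∀ j : ℕ, 1 ≤ j → j ≤ ℓ - 1 → Gap (B - j) := by
        intro j hj1 hj2
        rcases cover (B - j) with h | h
        · exact h
        · exfalso
          have hdd := hBeadIn _ h (by omega) (by omega)
          rw [show ((B - j : ℕ) : ℤ) = (B:ℤ) - j by omega] at hdd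
          exact jm_not_dvd_small ℓ hℓ (by exact_mod_cast hj1 : (0:ℤ) < j) (by omega)
            (jm_dvd_comb _ hdvd hdd (by ring))
      have hFB : B < F := by
        rcases lt_trichotomy F B with h | h | h
        · exact absurd (hBeadIn F hBF hDF h) hF
        · exact absurd (h ▸ hdvd) hF
        · exact h
      have hex : ∃ f', Bead f' ∧ B < f' ∧ ¬ (ℓ:ℤ) ∣ (f':ℤ) - D := ⟨F, hBF, hFB, hF⟩
      set F' := Nat.find hex with hF'def
      obtain ⟨hBF', hBF'2, hF'⟩ := Nat.find_spec hex
      have hmin : ∀ k, k < F' → Bead k → B < k → (ℓ:ℤ) ∣ (k:ℤ) - D := by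
        intro k hk h1 h2
        by_contra hc
        exact Nat.find_min hex hk ⟨h1, h2, hc⟩
      set j : ℤ := ((B:ℤ) - F') % ℓ with hjdef
      have hj0 : 0 ≤ j := Int.emod_nonneg _ (by omega)
      have hjl : j < ℓ := Int.emod_lt_of_pos _ (by omega)
      have hjne : j ≠ 0 := by
        intro h0
        have : (ℓ:ℤ) ∣ (B:ℤ) - F' := Int.dvd_of_emod_eq_zero h0
        exact hF' (jm_dvd_comb _ hdvd this (by ring))
      have hdvdj : (ℓ:ℤ) ∣ (B:ℤ) - F' - j := by
        rw [hjdef, Int.emod_def]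
        exact ⟨((B:ℤ) - F') / ℓ, by ring⟩
      obtain ⟨jn, hjn1, hjn2, hjn3⟩ : ∃ jn : ℕ, (jn:ℤ) = j ∧ 1 ≤ jn ∧ jn ≤ ℓ - 1 := by
        refine ⟨j.toNat, ?_, ?_, ?_⟩ <;> omega
      have hGg : Gap (B - jn) := hgaps jn hjn2 hjn3
      have hgZ : ((B - jn : ℕ) : ℤ) = (B:ℤ) - j := by omega
      have hpair : (ℓ:ℤ) ∣ (F':ℤ) - ((B - jn : ℕ):ℤ) := by
        rw [hgZ, show (F':ℤ) - ((B:ℤ) - j) = -((B:ℤ) - F' - j) by ring]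
        exact dvd_neg.mpr hdvdj
      have hfB : ¬ (ℓ:ℤ) ∣ (B:ℤ) - ((B - jn : ℕ):ℤ) := by
        rw [hgZ]
        exact fun h => jm_not_dvd_small ℓ hℓ (by omega : (0:ℤ) < j) hjl
          (by rwa [show (B:ℤ) - ((B:ℤ) - j) = j by ring] at h)
      rcases Nat.lt_or_ge jn 2 with hj2 | hj2
      · -- jn = 1 : gap e := B+1
        have hjn1' : jn = 1 := by omega
        have hF'B2 : B + 2 ≤ F' := by
          by_contra hc
          push_neg at hc
          have hFeq : F' = B + 1 := by omega
          have h2 : (ℓ:ℤ) ∣ (2:ℤ) :=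
            jm_dvd_comb _ (dvd_neg.mpr hdvdj) (dvd_zero _) (by rw [hFeq]; omega)
          exact jm_not_dvd_small ℓ hℓ (by omega : (0:ℤ) < 2) (by omega) h2
        have hGe : Gap (B + 1) := by
          rcases cover (B + 1) with h | h
          · exact h
          · exfalso
            have hdd := hmin (B+1) (by omega) h (by omega)
            have h1 : (ℓ:ℤ) ∣ (1:ℤ) := jm_dvd_comb _ hdd hdvd (by push_cast; ring)
            exact jm_not_dvd_small ℓ hℓ (by omega : (0:ℤ) < 1) (by omega) h1
        refine ⟨B - jn, F', B + 1, B, hGg, hBF', hGe, hBB, by omega, by omega, by omega,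
          by omega, hpair, ?_, hfB⟩
        intro h
        rw [show ((B + 1 : ℕ):ℤ) - ((B - jn : ℕ):ℤ) = 2 by omega] at h
        exact jm_not_dvd_small ℓ hℓ (by omega : (0:ℤ) < 2) (by omega) h
      · -- jn ≥ 2 : gap e := B - 1
        have hGe : Gap (B - 1) := hgaps 1 le_rfl (by omega)
        refine ⟨B - jn, F', B - 1, B, hGg, hBF', hGe, hBB, by omega, by omega, by omega,
          by omega, hpair, ?_, hfB⟩
        intro h
        rw [show ((B - 1 : ℕ):ℤ) - ((B - jn : ℕ):ℤ) = (jn:ℤ) - 1 by omega] at h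
        exact jm_not_dvd_small ℓ hℓ (by omega : (0:ℤ) < (jn:ℤ) - 1) (by omega) h
  · -- Case 2 : every gap strictly inside (D,B) has ℓ ∣ · - D
    push_neg at hGapIn
    have hbeads : ∀ j : ℕ, 1 ≤ j → j ≤ ℓ - 1 → Bead (D + j) := by
      intro j hj1 hj2
      rcases cover (D + j) with h | h
      · exfalso
        have hdd := hGapIn _ h (by omega) (by omega)
        rw [show ((D + j : ℕ) : ℤ) = (D:ℤ) + j by push_cast; ring] at hdd
        exact jm_not_dvd_small ℓ hℓ (by exact_mod_cast hj1 : (0:ℤ) < j) (by omega)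
          (by rwa [show (D:ℤ) + j - D = (j:ℤ) by ring] at hdd)
      · exact h
    have hED : E < D := by
      rcases lt_trichotomy E D with h | h | h
      · exact h
      · exfalso
        apply hE
        rw [h]
        exact ⟨0, by ring⟩
      · exact absurd (hGapIn E hGE h hEB) hE
    set E' := Nat.findGreatest (fun e' => Gap e' ∧ ¬ (ℓ:ℤ) ∣ (e':ℤ) - D) D with hE'def
    have hspec := Nat.findGreatest_spec
      (P := fun e' => Gap e' ∧ ¬ (ℓ:ℤ) ∣ (e':ℤ) - D) (le_of_lt hED) ⟨hGE, hE⟩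
    rw [← hE'def] at hspec
    obtain ⟨hGE', hE'⟩ := hspec
    have hE'D : E' < D := by
      have h1 : E' ≤ D := Nat.findGreatest_le D
      rcases eq_or_lt_of_le h1 with h | h
      · exfalso
        apply hE'
        rw [h]
        exact ⟨0, by ring⟩
      · exact h
    have hmax : ∀ k, E' < k → k ≤ D → Gap k → (ℓ:ℤ) ∣ (k:ℤ) - D := by
      intro k h1 h2 hg
      by_contra hc
      exact Nat.findGreatest_is_greatest h1 h2 ⟨hg, hc⟩
    set j : ℤ := ((E':ℤ) - D) % ℓ with hjdef
    have hj0 : 0 ≤ j := Int.emod_nonneg _ (by omega)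
    have hjl : j < ℓ := Int.emod_lt_of_pos _ (by omega)
    have hjne : j ≠ 0 := fun h0 => hE' (Int.dvd_of_emod_eq_zero h0)
    have hdvdj : (ℓ:ℤ) ∣ (E':ℤ) - D - j := by
      rw [hjdef, Int.emod_def]
      exact ⟨((E':ℤ) - D) / ℓ, by ring⟩
    obtain ⟨jn, hjn1, hjn2, hjn3⟩ : ∃ jn : ℕ, (jn:ℤ) = j ∧ 1 ≤ jn ∧ jn ≤ ℓ - 1 := by
      refine ⟨j.toNat, ?_, ?_, ?_⟩ <;> omega
    have hBb : Bead (D + jn) := hbeads jn hjn2 hjn3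
    have hpair : (ℓ:ℤ) ∣ ((D + jn : ℕ):ℤ) - E' := by
      rw [show ((D + jn : ℕ):ℤ) - E' = -((E':ℤ) - D - j) by push_cast; omega]
      exact dvd_neg.mpr hdvdj
    have heD : ¬ (ℓ:ℤ) ∣ (D:ℤ) - E' := by
      intro h
      exact jm_not_dvd_small ℓ hℓ (by omega : (0:ℤ) < j) hjl
        (jm_dvd_comb _ (dvd_neg.mpr hdvdj) h (by ring))
    rcases Nat.lt_or_ge jn 2 with hj2 | hj2
    · -- jn = 1 : bead f := D - 1
      have hjn1' : jn = 1 := by omega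
      have hDE2 : E' + 2 ≤ D := by
        by_contra hc
        push_neg at hc
        have hDeq : D = E' + 1 := by omega
        have h2 : (ℓ:ℤ) ∣ (2:ℤ) :=
          jm_dvd_comb _ (dvd_neg.mpr hdvdj) (dvd_zero _) (by rw [hDeq]; omega)
        exact jm_not_dvd_small ℓ hℓ (by omega : (0:ℤ) < 2) (by omega) h2
      have hBf : Bead (D - 1) := by
        rcases cover (D - 1) with h | h
        · exfalso
          have hdd := hmax (D-1) (by omega) (by omega) h
          rw [show ((D - 1 : ℕ):ℤ) - (D:ℤ) = -1 by omega] at hdd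
          exact jm_not_dvd_small ℓ hℓ (by omega : (0:ℤ) < 1) (by omega) (dvd_neg.mp hdd)
        · exact h
      refine ⟨E', D + jn, D, D - 1, hGE', hBb, hGD, hBf, hE'D, by omega, by omega,
        by omega, hpair, heD, ?_⟩
      intro h
      have h2 : (ℓ:ℤ) ∣ (-2:ℤ) :=
        jm_dvd_comb _ h (dvd_neg.mpr hdvdj) (by omega)
      exact jm_not_dvd_small ℓ hℓ (by omega : (0:ℤ) < 2) (by omega) (dvd_neg.mp (by
        rwa [show (-2:ℤ) = -2 by ring] at h2))
    · -- jn ≥ 2 : bead f := D + 1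
      have hBf : Bead (D + 1) := hbeads 1 le_rfl (by omega)
      refine ⟨E', D + jn, D, D + 1, hGE', hBb, hGD, hBf, hE'D, by omega, by omega,
        by omega, hpair, heD, ?_⟩
      intro h
      have h2 : (ℓ:ℤ) ∣ (jn:ℤ) - 1 := jm_dvd_comb _ hpair h (by push_cast; ring)
      exact jm_not_dvd_small ℓ hℓ (by omega : (0:ℤ) < (jn:ℤ) - 1) (by omega) h2

/-- If `λ` is not an `(ℓ,0)`-JM partition, then there are boxes `(c,d)`,
`(c,w)`, `(z,d)` of `λ` with `c < z`, `d < w`, `ℓ ∣ h_(c,d)`, `ℓ ∤ h_(c,w)`, `ℓ ∤ h_(z,d)`. -/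
theorem statement1 (ℓ : ℕ) (hℓ : 2 < ℓ) (lam : YPartition) (hnotJM : ¬ IsJM ℓ lam) :
    ∃ c d w z : ℕ, (c, d) ∈ lam.cells ∧ (c, w) ∈ lam.cells ∧ (z, d) ∈ lam.cells ∧
      c < z ∧ d < w ∧
      ℓ ∣ lam.hook c d ∧ ¬ ℓ ∣ lam.hook c w ∧ ¬ ℓ ∣ lam.hook z d := by
  classical
  obtain ⟨a, b, y, xx, hab, hay, hxb, hdab, hnay, hnxb⟩ := not_not.mp hnotJM
  obtain ⟨N0, hN0⟩ := lam.eventually_zero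
  set L := N0 + 1 with hLdef
  have hL : ∀ i, L ≤ i → lam.part i = 0 := fun i hi => hN0 i (by omega)
  have hL0 : 1 ≤ L := by omega
  obtain ⟨ha1, hb1, hba⟩ := hab
  obtain ⟨_, hy1, hya⟩ := hay
  obtain ⟨hx1, _, hbx⟩ := hxb
  simp only at ha1 hb1 hba hy1 hya hx1 hbx
  -- abacus positions
  have hookab := jm_hook_eq lam L hL a b ⟨ha1, hb1, hba⟩
  have hookay := jm_hook_eq lam L hL a y ⟨ha1, hy1, hya⟩
  have hookxb := jm_hook_eq lam L hL xx b ⟨hx1, hb1, hbx⟩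
  have hpab := jm_hook_pos lam a b
  have hpay := jm_hook_pos lam a y
  have hpxb := jm_hook_pos lam xx b
  set D := (b - 1) + (L - lam.colLen b) with hD
  set B := lam.part a + (L - a) with hB
  set E := (y - 1) + (L - lam.colLen y) with hE
  set F := lam.part xx + (L - xx) with hF
  have hdvd : (ℓ:ℤ) ∣ (B:ℤ) - D := by
    have h1 : (B:ℤ) - D = (lam.hook a b : ℤ) := by omega
    rw [h1]
    exact Int.natCast_dvd_natCast.mpr hdab
  have hEd : ¬ (ℓ:ℤ) ∣ (E:ℤ) - D := by
    intro h
    apply hnay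
    apply Int.natCast_dvd_natCast.mp
    have h2 : (lam.hook a y : ℤ) = ((B:ℤ) - D) - ((E:ℤ) - D) := by omega
    rw [h2]
    exact dvd_sub hdvd h
  have hFd : ¬ (ℓ:ℤ) ∣ (F:ℤ) - D := by
    intro h
    apply hnxb
    apply Int.natCast_dvd_natCast.mp
    have h2 : (lam.hook xx b : ℤ) = (F:ℤ) - D := by omega
    rw [h2]
    exact h
  obtain ⟨g, bd, e, f, ⟨d, hd1, hgd⟩, ⟨c, hc1, hbc⟩, ⟨w, hw1, hew⟩, ⟨z, hz1, hfz⟩,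
      hge, heb, hgf, hfb, hdvd', hnde, hndf⟩ :=
    jm_core ℓ hℓ
      (fun n => ∃ d, 1 ≤ d ∧ (d - 1) + (L - lam.colLen d) = n)
      (fun n => ∃ c, 1 ≤ c ∧ lam.part c + (L - c) = n)
      (jm_cover lam L hL0 hL)
      D B E F ⟨b, hb1, rfl⟩ ⟨a, ha1, rfl⟩ (by omega) hdvd
      ⟨y, hy1, rfl⟩ (by omega) hEd ⟨xx, hx1, rfl⟩ (by omega) hFd
  -- translate back
  have hcd : (c, d) ∈ lam.cells := jm_cell_of lam L hL c d hc1 hd1 (by omega)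
  have hcw : (c, w) ∈ lam.cells := jm_cell_of lam L hL c w hc1 hw1 (by omega)
  have hzd : (z, d) ∈ lam.cells := jm_cell_of lam L hL z d hz1 hd1 (by omega)
  have hookcd := jm_hook_eq lam L hL c d hcd
  have hookcw := jm_hook_eq lam L hL c w hcw
  have hookzd := jm_hook_eq lam L hL z d hzd
  refine ⟨c, d, w, z, hcd, hcw, hzd, ?_, ?_, ?_, ?_, ?_⟩
  · -- c < z
    by_contra hcc
    push_neg at hcc
    have := lam.antitone z c hz1 hcc
    omega
  · -- d < w
    by_contra hcc
    push_neg at hcc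
    have := jm_colLen_anti lam L hL w d hw1 hcc
    have h5 : lam.colLen d ≤ L := jm_colLen_le lam L hL d hd1
    have h6 : lam.colLen w ≤ L := jm_colLen_le lam L hL w hw1
    omega
  · apply Int.natCast_dvd_natCast.mp
    have h2 : (lam.hook c d : ℤ) = (bd:ℤ) - g := by omega
    rw [h2]
    exact hdvd'
  · intro hcon
    apply hnde
    have h2 : ((e:ℤ) - g) = ((bd:ℤ) - g) - (lam.hook c w : ℤ) := by omega
    rw [h2]
    exact dvd_sub hdvd' (Int.natCast_dvd_natCast.mpr hcon)
  · intro hcon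
    apply hndf
    have h2 : ((f:ℤ) - g) = (lam.hook z d : ℤ) := by omega
    rw [h2]
    exact Int.natCast_dvd_natCast.mpr hcon
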